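/- Let (a_n)_{n≥0} be positive reals with a_0 = 1, and on the space of polynomials ℂ[z_1,…,z_d] with inner product ⟨z^α, z^β⟩ = δ_{αβ}(1/a_{|α|})(α!/|α|!), let M_{z_j} denote multiplication by z_j. Then for every homogeneous polynomial p of degree m ≥ n, ∑_{|α|=n} (n!/α!) M_z^α (M_z*)^α p = (a_{m−n}/a_m) · p, where M_z^α = M_{z_1}^{α_1}⋯M_{z_d}^{α_d} and the adjoint is taken with respect to the given inner product restricted to polynomials of degree ≤ some fixed N ≥ m. -/

import Mathlib

/-- The unitarily invariant inner product on polynomials determined by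
`⟨zᵅ, zᵝ⟩ = δ_{αβ} (1/a_{|α|}) α!/|α|!` (conjugate-linear in the first argument). -/
noncomputable def uiInner (d : ℕ) (a : ℕ → ℝ) (p q : MvPolynomial (Fin d) ℂ) : ℂ :=
  ∑ α ∈ p.support ∪ q.support,
    (starRingEnd ℂ) (MvPolynomial.coeff α p) * MvPolynomial.coeff α q *
      ((((∏ j, Nat.factorial (α j) : ℕ) : ℝ) / (Nat.factorial (∑ j, α j)) / a (∑ j, α j) : ℝ) : ℂ)

namespace Stmt17Aux

open MvPolynomial Finset

/-- The weight of a monomial in the unitarily invariant inner product. -/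
noncomputable def wgt {d : ℕ} (a : ℕ → ℝ) (α : Fin d →₀ ℕ) : ℝ :=
  ((∏ j, Nat.factorial (α j) : ℕ) : ℝ) / (Nat.factorial (∑ j, α j)) / a (∑ j, α j)

lemma wgt_pos {d : ℕ} {a : ℕ → ℝ} (hap : ∀ k, 0 < a k) (α : Fin d →₀ ℕ) : 0 < wgt a α := by
  refine div_pos (div_pos ?_ ?_) (hap _) <;> positivity

lemma uiInner_monomial {d : ℕ} (a : ℕ → ℝ) (x : MvPolynomial (Fin d) ℂ) (γ : Fin d →₀ ℕ) :
    uiInner d a x (monomial γ 1) = (starRingEnd ℂ) (coeff γ x) * ((wgt a γ : ℝ) : ℂ) := by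
  have hγ : γ ∈ x.support ∪ (monomial γ (1:ℂ)).support := by
    simp [MvPolynomial.support_monomial]
  rw [uiInner, Finset.sum_eq_single_of_mem γ hγ]
  · simp [MvPolynomial.coeff_monomial, wgt]
  · intro β _ hβ
    simp [MvPolynomial.coeff_monomial, Ne.symm hβ]

lemma uiInner_ext {d : ℕ} {a : ℕ → ℝ} (hap : ∀ k, 0 < a k) {x y : MvPolynomial (Fin d) ℂ}
    (h : ∀ γ, uiInner d a x (monomial γ 1) = uiInner d a y (monomial γ 1)) : x = y := by
  ext γ
  have := h γ
  rw [uiInner_monomial, uiInner_monomial] at this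
  have hw : ((wgt a γ : ℝ) : ℂ) ≠ 0 := by
    exact_mod_cast (wgt_pos hap γ).ne'
  exact (starRingEnd ℂ).injective (mul_right_cancel₀ hw this)

lemma A_monomial {d : ℕ} {a : ℕ → ℝ} (hap : ∀ k, 0 < a k)
    (A : Fin d → Module.End ℂ (MvPolynomial (Fin d) ℂ))
    (hA : ∀ (j : Fin d) (p q : MvPolynomial (Fin d) ℂ),
      uiInner d a (A j p) q = uiInner d a p (MvPolynomial.X j * q))
    (j : Fin d) (β : Fin d →₀ ℕ) (c : ℂ) :
    A j (monomial β c) = if 1 ≤ β j then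
      ((wgt a β / wgt a (β - Finsupp.single j 1) : ℝ) : ℂ) • monomial (β - Finsupp.single j 1) c
    else 0 := by
  apply uiInner_ext hap
  intro γ
  rw [hA]
  have hXm : (X j : MvPolynomial (Fin d) ℂ) * monomial γ 1
      = monomial (Finsupp.single j 1 + γ) 1 := by
    rw [X, monomial_mul, one_mul]
  rw [hXm, uiInner_monomial, uiInner_monomial]
  by_cases h1 : 1 ≤ β j
  · rw [if_pos h1]
    have hle : Finsupp.single j 1 ≤ β := by
      intro i
      rcases eq_or_ne i j with rfl | hij
      · simpa using h1
      · simp [Finsupp.single_apply, Ne.symm hij]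
    by_cases h2 : β = Finsupp.single j 1 + γ
    · have hγ : β - Finsupp.single j 1 = γ := by
        rw [h2]; simp
      rw [coeff_monomial, if_pos h2, hγ, coeff_smul, coeff_monomial, if_pos rfl]
      have hwγ : (0:ℝ) < wgt a γ := wgt_pos hap γ
      have hwγ' : ((wgt a γ : ℝ) : ℂ) ≠ 0 := by exact_mod_cast hwγ.ne'
      rw [smul_eq_mul, map_mul, Complex.conj_ofReal, ← h2]
      push_cast
      field_simp
    · rw [coeff_monomial, if_neg h2, coeff_smul, coeff_monomial]
      have : ¬ (β - Finsupp.single j 1 = γ) := by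
        intro h
        apply h2
        rw [← h, add_tsub_cancel_of_le hle]
      rw [if_neg this]
      simp
  · rw [if_neg h1]
    have : ¬ (β = Finsupp.single j 1 + γ) := by
      intro h
      apply h1
      have := congrArg (fun f => f j) h
      simp [Finsupp.single_apply] at this
      omega
    rw [coeff_monomial, if_neg this]
    simp

/-- The multi-index counting the occurrences of each variable in a list. -/
noncomputable def cnt {d : ℕ} (L : List (Fin d)) : Fin d →₀ ℕ :=
  (L.map fun j => Finsupp.single j 1).sum

@[simp] lemma cnt_nil {d : ℕ} : cnt ([] : List (Fin d)) = 0 := rfl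

@[simp] lemma cnt_cons {d : ℕ} (j : Fin d) (L : List (Fin d)) :
    cnt (j :: L) = Finsupp.single j 1 + cnt L := by simp [cnt]

lemma listA {d : ℕ} {a : ℕ → ℝ} (hap : ∀ k, 0 < a k)
    {A : Fin d → Module.End ℂ (MvPolynomial (Fin d) ℂ)}
    (hAm : ∀ (j : Fin d) (β : Fin d →₀ ℕ) (c : ℂ),
      A j (monomial β c) = if 1 ≤ β j then
        ((wgt a β / wgt a (β - Finsupp.single j 1) : ℝ) : ℂ) • monomial (β - Finsupp.single j 1) c
      else 0) :
    ∀ (L : List (Fin d)) (β : Fin d →₀ ℕ) (c : ℂ),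
      (L.map A).prod (monomial β c) = if cnt L ≤ β then
        ((wgt a β / wgt a (β - cnt L) : ℝ) : ℂ) • monomial (β - cnt L) c
      else 0 := by
  intro L
  induction L with
  | nil =>
    intro β c
    simp [div_self (wgt_pos hap β).ne']
  | cons j L ih =>
    intro β c
    rw [List.map_cons, List.prod_cons]
    have : ((A j : Module.End ℂ (MvPolynomial (Fin d) ℂ)) * (L.map A).prod) (monomial β c)
        = A j ((L.map A).prod (monomial β c)) := rfl
    rw [this, ih]
    by_cases h1 : cnt L ≤ β
    · rw [if_pos h1, map_smul, hAm]
      by_cases h2 : 1 ≤ (β - cnt L) j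
      · have hle : cnt (j :: L) ≤ β := by
          intro i
          rcases eq_or_ne i j with rfl | hij
          · have := Finsupp.tsub_apply β (cnt L) i
            have h1i := h1 i
            simp only [cnt_cons, Finsupp.add_apply, Finsupp.single_eq_same]
            have h2' : 1 ≤ β i - cnt L i := by
              rwa [Finsupp.tsub_apply] at h2
            omega
          · have h1i := h1 i
            simp only [cnt_cons, Finsupp.add_apply, Finsupp.single_eq_of_ne' (Ne.symm hij)]
            omega
        rw [if_pos h2, if_pos hle, smul_smul]
        have hsub : β - cnt L - Finsupp.single j 1 = β - cnt (j :: L) := by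
          rw [tsub_tsub, cnt_cons, add_comm]
        rw [hsub]
        congr 1
        rw [← Complex.ofReal_mul]
        congr 1
        have h2' : (0:ℝ) < wgt a (β - cnt L) := wgt_pos hap _
        field_simp
      · rw [if_neg h2, smul_zero]
        have : ¬ cnt (j :: L) ≤ β := by
          intro hle
          apply h2
          have := hle j
          have h1j := h1 j
          simp only [cnt_cons, Finsupp.add_apply, Finsupp.single_eq_same] at this
          rw [Finsupp.tsub_apply]
          omega
        rw [if_neg this]
    · rw [if_neg h1, map_zero]
      have : ¬ cnt (j :: L) ≤ β := by
        intro hle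
        apply h1
        refine le_trans ?_ hle
        simp [cnt_cons]
      rw [if_neg this]

lemma prod_ofFn_pow {d : ℕ} (A : Fin d → Module.End ℂ (MvPolynomial (Fin d) ℂ)) (α : Fin d → ℕ) :
    (List.ofFn fun j => A j ^ α j).prod
      = (((List.ofFn fun j => List.replicate (α j) j).flatten).map A).prod := by
  simp [List.map_flatten, List.prod_flatten, List.map_ofFn, Function.comp_def, List.map_replicate,
    List.prod_replicate]

lemma cnt_join {d : ℕ} (α : Fin d → ℕ) :
    cnt ((List.ofFn fun j => List.replicate (α j) j).flatten) = ∑ j, Finsupp.single j (α j) := by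
  simp [cnt, List.map_flatten, List.sum_flatten, List.map_ofFn, Function.comp_def, List.map_replicate,
    List.sum_replicate, List.sum_ofFn, Finsupp.smul_single]

lemma gamma_apply {d : ℕ} (α : Fin d → ℕ) (i : Fin d) :
    (∑ j, Finsupp.single j (α j) : Fin d →₀ ℕ) i = α i := by
  rw [Finsupp.finset_sum_apply]
  simp [Finsupp.single_apply]

/-- Generalized Vandermonde identity. -/
lemma vdm {ι : Type*} [DecidableEq ι] (s : Finset ι) (β : ι → ℕ) (n : ℕ) :
    ∑ α ∈ s.piAntidiag n, ∏ j ∈ s, (β j).choose (α j) = (∑ j ∈ s, β j).choose n := by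
  induction s using Finset.cons_induction generalizing n with
  | empty =>
    rcases Nat.eq_zero_or_pos n with rfl | hn
    · simp
    · simp [Finset.piAntidiag_empty_of_ne_zero hn.ne', Nat.choose_eq_zero_of_lt hn]
  | cons i s hi ih =>
    rw [Finset.piAntidiag_cons hi, Finset.sum_disjiUnion, Finset.sum_cons,
      Nat.add_choose_eq]
    refine Finset.sum_congr rfl fun p hp => ?_
    rw [Finset.sum_map]
    have : ∀ α ∈ s.piAntidiag p.2,
        ∏ j ∈ cons i s hi, (β j).choose
          ((addRightEmbedding (fun t => if t = i then p.1 else 0) α) j)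
        = (β i).choose p.1 * ∏ j ∈ s, (β j).choose (α j) := by
      intro α hα
      rw [Finset.mem_piAntidiag] at hα
      have hαi : α i = 0 := by
        by_contra h
        exact hi (hα.2 i h)
      rw [Finset.prod_cons]
      congr 1
      · simp [addRightEmbedding, hαi]
      · refine Finset.prod_congr rfl fun j hj => ?_
        have : j ≠ i := fun h => hi (h ▸ hj)
        simp [addRightEmbedding, this]
    rw [Finset.sum_congr rfl this, ← Finset.mul_sum, ih]

lemma prod_X_pow_univ {d : ℕ} (s : Fin d →₀ ℕ) :
    ∏ j, (X j : MvPolynomial (Fin d) ℂ) ^ s j = monomial s 1 := by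
  rw [← MvPolynomial.prod_X_pow_eq_monomial]
  exact (Finset.prod_subset (Finset.subset_univ _)
    (fun j _ hj => by simp [Finsupp.notMem_support_iff.mp hj])).symm

lemma key {d : ℕ} {a : ℕ → ℝ} (hap : ∀ k, 0 < a k)
    {A : Fin d → Module.End ℂ (MvPolynomial (Fin d) ℂ)}
    (hAm : ∀ (j : Fin d) (β : Fin d →₀ ℕ) (c : ℂ),
      A j (monomial β c) = if 1 ≤ β j then
        ((wgt a β / wgt a (β - Finsupp.single j 1) : ℝ) : ℂ) • monomial (β - Finsupp.single j 1) c
      else 0)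
    (m n : ℕ) (hmn : n ≤ m) (β : Fin d →₀ ℕ) (hβ : ∑ j, β j = m) (c : ℂ) :
    ∑ α ∈ Finset.Nat.antidiagonalTuple d n,
      (Nat.multinomial Finset.univ α : ℂ) •
        ((∏ j, MvPolynomial.X j ^ α j) * ((List.ofFn fun j => A j ^ α j).prod (monomial β c)))
      = (((a (m - n) / a m : ℝ)) : ℂ) • monomial β c := by
  have hterm : ∀ α ∈ Finset.Nat.antidiagonalTuple d n,
      (Nat.multinomial Finset.univ α : ℂ) •
        ((∏ j, MvPolynomial.X j ^ α j) * ((List.ofFn fun j => A j ^ α j).prod (monomial β c)))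
      = (((Nat.factorial n * Nat.factorial (m-n) / Nat.factorial m
            * (a (m-n) / a m) * (∏ j, (β j).choose (α j)) : ℝ)) : ℂ) • monomial β c := by
    intro α hα
    have hαsum : ∑ j, α j = n := (Finset.Nat.mem_antidiagonalTuple.mp hα)
    set γ : Fin d →₀ ℕ := ∑ j, Finsupp.single j (α j) with hγ
    rw [prod_ofFn_pow, listA hap hAm, cnt_join]
    by_cases hle : (γ : Fin d →₀ ℕ) ≤ β
    · rw [if_pos hle]
      have hXγ : (∏ j, (X j : MvPolynomial (Fin d) ℂ) ^ α j) = monomial γ 1 := by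
        rw [← prod_X_pow_univ γ]
        exact Finset.prod_congr rfl fun j _ => by rw [gamma_apply]
      rw [hXγ, mul_smul_comm, monomial_mul, one_mul, add_tsub_cancel_of_le hle, smul_smul]
      congr 1
      have hsum_sub : ∑ j, (β - γ) j = m - n := by
        have h1 : ∀ j, (β - γ) j = β j - α j := fun j => by
          rw [Finsupp.tsub_apply, gamma_apply]
        have h2 : (∑ j, (β - γ) j) + n = m := by
          rw [← hαsum, ← hβ, ← Finset.sum_add_distrib]
          exact Finset.sum_congr rfl fun j _ => by
            rw [h1 j]
            have := hle j
            rw [gamma_apply] at this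
            omega
        omega
      have hαβ : ∀ j, α j ≤ β j := fun j => by
        have := hle j; rwa [gamma_apply] at this
      have hnat : Nat.multinomial Finset.univ α * ∏ j, Nat.factorial (β j)
          = Nat.factorial n * ((∏ j, (β j).choose (α j)) * ∏ j, Nat.factorial (β j - α j)) := by
        have hfact : ∀ j : Fin d, Nat.factorial (β j)
            = (β j).choose (α j) * Nat.factorial (α j) * Nat.factorial (β j - α j) :=
          fun j => (Nat.choose_mul_factorial_mul_factorial (hαβ j)).symm
        calc Nat.multinomial Finset.univ α * ∏ j, Nat.factorial (β j)
            = Nat.multinomial Finset.univ α *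
              ∏ j, ((β j).choose (α j) * Nat.factorial (α j) * Nat.factorial (β j - α j)) := by
              rw [Finset.prod_congr rfl fun j _ => hfact j]
          _ = ((∏ j, Nat.factorial (α j)) * Nat.multinomial Finset.univ α) *
              ((∏ j, (β j).choose (α j)) * ∏ j, Nat.factorial (β j - α j)) := by
              rw [Finset.prod_mul_distrib, Finset.prod_mul_distrib]; ring
          _ = Nat.factorial n * ((∏ j, (β j).choose (α j)) * ∏ j, Nat.factorial (β j - α j)) := by
              rw [Nat.multinomial_spec, hαsum]
      have hwβ : wgt a β = ((∏ j, Nat.factorial (β j) : ℕ) : ℝ) / Nat.factorial m / a m := by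
        rw [wgt, hβ]
      have hwβγ : wgt a (β - γ) =
          ((∏ j, Nat.factorial (β j - α j) : ℕ) : ℝ) / Nat.factorial (m-n) / a (m-n) := by
        rw [wgt, hsum_sub]
        congr 2
        exact_mod_cast congrArg (Nat.cast (R := ℝ)) (Finset.prod_congr rfl fun j _ => by
          rw [Finsupp.tsub_apply, gamma_apply])
      rw [hwβ, hwβγ]
      rw [← Complex.ofReal_natCast (Nat.multinomial Finset.univ α), ← Complex.ofReal_mul]
      congr 1
      have hm : (Nat.factorial m : ℝ) ≠ 0 := Nat.cast_ne_zero.mpr (Nat.factorial_pos m).ne'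
      have hmn' : (Nat.factorial (m-n) : ℝ) ≠ 0 := Nat.cast_ne_zero.mpr (Nat.factorial_pos _).ne'
      have hbmγ : ((∏ j, Nat.factorial (β j - α j) : ℕ) : ℝ) ≠ 0 := by
        exact_mod_cast (Nat.pos_of_ne_zero (Finset.prod_ne_zero_iff.mpr
          fun j _ => (Nat.factorial_pos _).ne')).ne'
      have ham : a m ≠ 0 := (hap m).ne'
      have hamn : a (m-n) ≠ 0 := (hap (m-n)).ne'
      have hnatR : (Nat.multinomial Finset.univ α : ℝ) * ((∏ j, Nat.factorial (β j) : ℕ) : ℝ)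
          = (Nat.factorial n : ℝ) * ((∏ j, ((β j).choose (α j) : ℝ)) *
              ((∏ j, Nat.factorial (β j - α j) : ℕ) : ℝ)) := by
        push_cast
        exact_mod_cast congrArg (Nat.cast (R := ℝ)) hnat
      field_simp
      push_cast at hnatR ⊢
      linear_combination hnatR
    · rw [if_neg hle, mul_zero, smul_zero]
      have : ∃ i, β i < α i := by
        by_contra h
        push_neg at h
        exact hle (fun i => by rw [gamma_apply]; exact h i)
      obtain ⟨i, hi⟩ := this
      rw [show (∏ j, ((β j).choose (α j) : ℕ)) = 0 from
        Finset.prod_eq_zero (Finset.mem_univ i) (Nat.choose_eq_zero_of_lt hi)]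
      norm_num
  rw [Finset.sum_congr rfl hterm]
  have : ∑ α ∈ Finset.Nat.antidiagonalTuple d n,
      (((Nat.factorial n * Nat.factorial (m-n) / Nat.factorial m
          * (a (m-n) / a m) * (∏ j, (β j).choose (α j)) : ℝ)) : ℂ) • monomial β c
      = (((Nat.factorial n * Nat.factorial (m-n) / Nat.factorial m * (a (m-n) / a m)
          * (Nat.choose m n) : ℝ)) : ℂ) • monomial β c := by
    rw [← Finset.sum_smul]
    congr 1
    rw [← Complex.ofReal_sum]
    congr 1
    rw [← Finset.mul_sum]
    congr 1
    have := vdm (Finset.univ : Finset (Fin d)) (fun j => β j) n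
    rw [Finset.piAntidiag_univ_fin_eq_antidiagonalTuple, hβ] at this
    exact_mod_cast this
  rw [this]
  congr 1
  have hm : (Nat.factorial m : ℝ) ≠ 0 := Nat.cast_ne_zero.mpr (Nat.factorial_pos m).ne'
  have hch : (Nat.choose m n : ℝ) * (Nat.factorial n) * (Nat.factorial (m-n))
      = Nat.factorial m := by
    exact_mod_cast congrArg (Nat.cast (R := ℝ)) (Nat.choose_mul_factorial_mul_factorial hmn)
  rw [Complex.ofReal_inj]
  have ham : a m ≠ 0 := (hap m).ne'
  have hamn : a (m-n) ≠ 0 := (hap (m-n)).ne'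
  field_simp
  linear_combination hch

end Stmt17Aux

/-- If `A j` is the adjoint of multiplication by `z_j` with respect to the unitarily
invariant inner product with weights `aₙ > 0`, then for every homogeneous polynomial
`p` of degree `m ≥ n`, `∑_{|α|=n} (n!/α!) M_zᵅ (M_z*)ᵅ p = (a_{m-n}/a_m) p`. -/
theorem stmt_17 (d : ℕ) (a : ℕ → ℝ) (ha0 : a 0 = 1) (hap : ∀ k, 0 < a k)
    (A : Fin d → Module.End ℂ (MvPolynomial (Fin d) ℂ))
    (hA : ∀ (j : Fin d) (p q : MvPolynomial (Fin d) ℂ),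
      uiInner d a (A j p) q = uiInner d a p (MvPolynomial.X j * q))
    (m n : ℕ) (hmn : n ≤ m)
    (p : MvPolynomial (Fin d) ℂ) (hp : p.IsHomogeneous m) :
    ∑ α ∈ Finset.Nat.antidiagonalTuple d n,
      (Nat.multinomial Finset.univ α : ℂ) •
        ((∏ j, MvPolynomial.X j ^ α j) * ((List.ofFn fun j => A j ^ α j).prod p))
      = (((a (m - n) / a m : ℝ)) : ℂ) • p := by
  classical
  open MvPolynomial Finset Stmt17Aux in
  have hAm : ∀ (j : Fin d) (β : Fin d →₀ ℕ) (c : ℂ),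
      A j (monomial β c) = if 1 ≤ β j then
        ((wgt a β / wgt a (β - Finsupp.single j 1) : ℝ) : ℂ) • monomial (β - Finsupp.single j 1) c
      else 0 := A_monomial hap A hA
  open MvPolynomial Finset Stmt17Aux in
  calc
    ∑ α ∈ Finset.Nat.antidiagonalTuple d n,
      (Nat.multinomial Finset.univ α : ℂ) •
        ((∏ j, MvPolynomial.X j ^ α j) * ((List.ofFn fun j => A j ^ α j).prod p))
      = ∑ α ∈ Finset.Nat.antidiagonalTuple d n, ∑ β ∈ p.support,
          (Nat.multinomial Finset.univ α : ℂ) •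
            ((∏ j, MvPolynomial.X j ^ α j) *
              ((List.ofFn fun j => A j ^ α j).prod (monomial β (coeff β p)))) := by
        refine Finset.sum_congr rfl fun α _ => ?_
        rw [show ((List.ofFn fun j => A j ^ α j).prod p)
            = ∑ β ∈ p.support, (List.ofFn fun j => A j ^ α j).prod (monomial β (coeff β p)) by
          rw [← map_sum, support_sum_monomial_coeff]]
        rw [Finset.mul_sum, Finset.smul_sum]
    _ = ∑ β ∈ p.support, ∑ α ∈ Finset.Nat.antidiagonalTuple d n,
          (Nat.multinomial Finset.univ α : ℂ) •
            ((∏ j, MvPolynomial.X j ^ α j) *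
              ((List.ofFn fun j => A j ^ α j).prod (monomial β (coeff β p)))) :=
        Finset.sum_comm
    _ = ∑ β ∈ p.support, (((a (m - n) / a m : ℝ)) : ℂ) • monomial β (coeff β p) := by
        refine Finset.sum_congr rfl fun β hβ => ?_
        refine key hap hAm m n hmn β ?_ (coeff β p)
        have hd := hp (MvPolynomial.mem_support_iff.mp hβ)
        rw [← hd]
        simp [Finsupp.weight_apply, Finsupp.sum_fintype]
    _ = (((a (m - n) / a m : ℝ)) : ℂ) • p := by
        rw [← Finset.smul_sum, support_sum_monomial_coeff]
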